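/- In a monoidal category W with associator α, for any objects A, B, C there is a natural isomorphism between the functors (T_{A,B} × 𝟭_{Over C}) ⋙ T_{A⊗B, C} ⋙ Over.map((α_{A,B,C}).hom) and the composite of the product-category associator (Over A × Over B) × Over C ≌ Over A × (Over B × Over C) with (𝟭_{Over A} × T_{B,C}) ⋙ T_{A, B⊗C}, whose component at ((h₁ : U₁ ⟶ A, h₂ : U₂ ⟶ B), h₃ : U₃ ⟶ C) is the isomorphism in Over (A ⊗ (B ⊗ C)) whose underlying morphism is (α_{U₁,U₂,U₃}).hom : (U₁ ⊗ U₂) ⊗ U₃ ⟶ U₁ ⊗ (U₂ ⊗ U₃). -/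

import Mathlib

open CategoryTheory MonoidalCategory

/-- The tensoring functor `Over A × Over B ⥤ Over (A ⊗ B)`. -/
@[simps]
def overTensor {W : Type*} [Category W] [MonoidalCategory W] (A B : W) :
    Over A × Over B ⥤ Over (A ⊗ B) where
  obj X := Over.mk (X.1.hom ⊗ₘ X.2.hom)
  map {X Y} φ := Over.homMk (φ.1.left ⊗ₘ φ.2.left)
    (by dsimp; rw [tensorHom_comp_tensorHom, Over.w, Over.w])

/-- In a monoidal category `W` with associator `α`, the two ways of tensoring three slice
categories are naturally isomorphic, with components given by the associator. -/
theorem exists_over_tensor_associator_iso {W : Type*} [Category W] [MonoidalCategory W]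
    (A B C : W) :
    ∃ e : ((overTensor A B).prod (𝟭 (Over C))) ⋙ overTensor (A ⊗ B) C ⋙
          Over.map (α_ A B C).hom ≅
        CategoryTheory.prod.associator (Over A) (Over B) (Over C) ⋙
          ((𝟭 (Over A)).prod (overTensor B C)) ⋙ overTensor A (B ⊗ C),
      ∀ X : (Over A × Over B) × Over C,
        (e.hom.app X).left = (α_ X.1.1.left X.1.2.left X.2.left).hom := by
  refine ⟨NatIso.ofComponents
    (fun X => Over.isoMk (α_ X.1.1.left X.1.2.left X.2.left)
      (by dsimp [overTensor]; rw [associator_naturality]; rfl))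
    (fun {X Y} f => by
      ext
      dsimp
      exact associator_naturality f.1.1.left f.1.2.left f.2.left), fun X => rfl⟩
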